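/- Complexity lower bound from high moments (core of the linear growth bound): Let 𝒢 be a gate set in U(d), let k be a natural number with 6 ≤ k ≤ d², let ε ∈ (0,1), and let ν be a probability measure on U(d) such that for every V ∈ U(d), ∫ |tr(U·Vᴴ)|^{2k} dν(U) ≤ k! + 1 (this holds when ν is a δ-approximate unitary k-expander with δ = d^{−2k}). Then for every natural number r: ν({U ∈ U(d) : ∃ W ∈ 𝒢^{≤r} with D(U,W) ≤ ε}) ≤ |𝒢|^{r+1} / (2(1−ε²))^k. Consequently, for Δ ∈ (0,1), with ν-probability at least 1−Δ the ε-complexity of U is at least (k·log(2(1−ε²)) − log(1/Δ))/log|𝒢|. -/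

import Mathlib

open MeasureTheory
open scoped ENNReal Matrix InnerProductSpace

namespace Paper

noncomputable section

instance matMS (d : ℕ) : MeasurableSpace (Matrix (Fin d) (Fin d) ℂ) := borel _
instance matBS (d : ℕ) : BorelSpace (Matrix (Fin d) (Fin d) ℂ) := ⟨rfl⟩

/-- The unitary group `U(d)`. -/
abbrev UG (d : ℕ) := Matrix.unitaryGroup (Fin d) ℂ

/-- ℓ²→ℓ² operator norm (spectral norm) of a matrix. -/
def opNorm {d : ℕ} (A : Matrix (Fin d) (Fin d) ℂ) : ℝ :=
  ‖Matrix.toEuclideanCLM (𝕜 := ℂ) A‖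

/-- Phase-invariant distance on unitary channels. -/
def D {d : ℕ} (U V : UG d) : ℝ :=
  ⨅ z : {z : ℂ // ‖z‖ = 1},
    opNorm ((U : Matrix (Fin d) (Fin d) ℂ) - z.val • (V : Matrix (Fin d) (Fin d) ℂ))

/-- Closed ball of radius `r` around `V` in `U(d)` for the distance `D`. -/
def ball {d : ℕ} (V : UG d) (r : ℝ) : Set (UG d) := {U | D U V ≤ r}

/-- Haar volume of a ball of radius `r`. -/
def Vol {d : ℕ} (μ : Measure (UG d)) (r : ℝ) : ℝ≥0∞ := μ (ball 1 r)

/-- `(α,β)`-equidistribution of `ν` at scale `ε` (relative to the Haar measure `μ`). -/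
def Equidistributed {d : ℕ} (μ ν : Measure (UG d)) (α β ε : ℝ) : Prop :=
  ∀ (V : UG d) (r : ℝ), ε ≤ r →
    Vol μ (α * r) ≤ ν (ball V r) ∧ ν (ball V r) ≤ Vol μ (β * r)

/-- Products of at most `r` elements of the gate set `𝒢`. -/
def wordsLe {d : ℕ} (𝒢 : Finset (UG d)) (r : ℕ) : Set (UG d) :=
  {W | ∃ l : List (UG d), l.length ≤ r ∧ (∀ g ∈ l, g ∈ 𝒢) ∧ l.prod = W}

/-- Convolution of two measures on a monoid: pushforward of the product measure under
multiplication. -/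
def mconv {G : Type*} [Monoid G] [MeasurableSpace G] (ν ϑ : Measure G) : Measure G :=
  (ν.prod ϑ).map (fun p => p.1 * p.2)

/-- `t`-fold convolution power of a measure. -/
def convPow {G : Type*} [Monoid G] [MeasurableSpace G] (ν : Measure G) : ℕ → Measure G
  | 0 => Measure.dirac 1
  | n + 1 => mconv (convPow ν n) ν

/-- The random walk `U_t = V_t ⋯ V_1`. -/
def walk {d : ℕ} {Ω : Type*} (V : ℕ → Ω → UG d) (t : ℕ) (ω : Ω) : UG d :=
  ((List.range t).map (fun i => V (t - i) ω)).prod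

/-- Euclidean space `ℂ^d`. -/
abbrev EV (d : ℕ) := EuclideanSpace ℂ (Fin d)

instance evMS (d : ℕ) : MeasurableSpace (EV d) := borel _
instance evBS (d : ℕ) : BorelSpace (EV d) := ⟨rfl⟩

/-- Distance on pure states. -/
def dS {d : ℕ} (ψ φ : EV d) : ℝ := Real.sqrt (1 - ‖⟪ψ, φ⟫_ℂ‖ ^ 2)

/-- Ball of radius `r` around the state `φ`, inside the set of unit vectors. -/
def ballS {d : ℕ} (φ : EV d) (r : ℝ) : Set (EV d) := {ψ | ‖ψ‖ = 1 ∧ dS ψ φ ≤ r}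

/-- Action of a unitary matrix on a vector. -/
def act {d : ℕ} (U : UG d) (ψ : EV d) : EV d :=
  Matrix.toEuclideanLin (U : Matrix (Fin d) (Fin d) ℂ) ψ

/-- Topological support of a measure. -/
def msupport {X : Type*} [TopologicalSpace X] [MeasurableSpace X] (ν : Measure X) : Set X :=
  {x | ∀ U : Set X, IsOpen U → x ∈ U → ν U ≠ 0}

/-- Packing number (as an extended nonnegative real): supremum of cardinalities of finite
subsets of `Y` whose elements are pairwise at `dist`-distance at least `ε`. -/
def Npack {X : Type*} (dist : X → X → ℝ) (Y : Set X) (ε : ℝ) : ℝ≥0∞ :=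
  ⨆ (S : Finset X) (_ : ↑S ⊆ Y ∧ (S : Set X).Pairwise fun x y => ε ≤ dist x y),
    (S.card : ℝ≥0∞)

end
end Paper

namespace Paper
open ProbabilityTheory

noncomputable section

set_option maxHeartbeats 1000000 in
instance ugBS (d : ℕ) : BorelSpace (UG d) :=
  Subtype.borelSpace (Matrix.unitaryGroup (Fin d) ℂ : Set (Matrix (Fin d) (Fin d) ℂ))

set_option maxHeartbeats 1000000 in
set_option synthInstance.maxHeartbeats 400000 in
lemma opNorm_conjT {d : ℕ} (A : Matrix (Fin d) (Fin d) ℂ) : opNorm Aᴴ = opNorm A := by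
  unfold opNorm
  rw [← Matrix.star_eq_conjTranspose, map_star, ContinuousLinearMap.star_eq_adjoint]
  exact ContinuousLinearMap.adjoint.norm_map _

set_option maxHeartbeats 1000000 in
set_option synthInstance.maxHeartbeats 400000 in
lemma row_sum_le {d : ℕ} (A : Matrix (Fin d) (Fin d) ℂ) (i : Fin d) :
    ∑ j, ‖A i j‖ ^ 2 ≤ opNorm A ^ 2 := by
  set v : EuclideanSpace ℂ (Fin d) :=
    Matrix.toEuclideanCLM (𝕜 := ℂ) Aᴴ (EuclideanSpace.single i 1) with hv
  have h1 : v = (WithLp.equiv 2 (Fin d → ℂ)).symm (fun j => star (A i j)) := by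
    rw [hv]
    have : (EuclideanSpace.single i 1 : EuclideanSpace ℂ (Fin d))
        = (WithLp.equiv 2 (Fin d → ℂ)).symm (Pi.single i 1) := rfl
    rw [this, show ∀ x : Fin d → ℂ, Matrix.toEuclideanCLM (𝕜 := ℂ) Aᴴ ((WithLp.equiv 2 (Fin d → ℂ)).symm x) = (WithLp.equiv 2 (Fin d → ℂ)).symm (Matrix.toLin' Aᴴ x) from fun x => rfl]
    congr 1
    funext j
    simp [Matrix.toLin'_apply, Matrix.mulVec_single, Matrix.conjTranspose_apply]
  have hnorm : ‖v‖ ≤ opNorm A := by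
    calc ‖v‖ ≤ opNorm Aᴴ * ‖(EuclideanSpace.single i 1 : EuclideanSpace ℂ (Fin d))‖ :=
          (Matrix.toEuclideanCLM (𝕜 := ℂ) Aᴴ).le_opNorm _
      _ = opNorm A := by rw [opNorm_conjT, EuclideanSpace.norm_single]; simp
  have hsum : ∑ j, ‖A i j‖ ^ 2 = ‖v‖ ^ 2 := by
    rw [EuclideanSpace.norm_eq, Real.sq_sqrt (by positivity)]
    congr 1; funext j; rw [h1]; simp
  rw [hsum]
  have h0 : (0:ℝ) ≤ ‖v‖ := norm_nonneg v
  nlinarith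

set_option maxHeartbeats 1000000 in
set_option synthInstance.maxHeartbeats 400000 in
lemma trace_sub_smul {d : ℕ} (U W : UG d) (z : ℂ) (hz : ‖z‖ = 1) :
    Matrix.trace (((U : Matrix (Fin d) (Fin d) ℂ) - z • (W : Matrix (Fin d) (Fin d) ℂ)) *
      ((U : Matrix (Fin d) (Fin d) ℂ) - z • (W : Matrix (Fin d) (Fin d) ℂ))ᴴ)
    = 2 * d - ((starRingEnd ℂ) z * Matrix.trace ((U : Matrix (Fin d) (Fin d) ℂ) * (W : Matrix (Fin d) (Fin d) ℂ)ᴴ)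
        + z * (starRingEnd ℂ) (Matrix.trace ((U : Matrix (Fin d) (Fin d) ℂ) * (W : Matrix (Fin d) (Fin d) ℂ)ᴴ))) := by
  have hU : (U : Matrix (Fin d) (Fin d) ℂ) * (U : Matrix (Fin d) (Fin d) ℂ)ᴴ = 1 := by
    have := U.2
    rw [Matrix.mem_unitaryGroup_iff] at this
    simpa [Matrix.star_eq_conjTranspose] using this
  have hW : (W : Matrix (Fin d) (Fin d) ℂ) * (W : Matrix (Fin d) (Fin d) ℂ)ᴴ = 1 := by
    have := W.2
    rw [Matrix.mem_unitaryGroup_iff] at this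
    simpa [Matrix.star_eq_conjTranspose] using this
  have hzz : z * (starRingEnd ℂ) z = 1 := by
    rw [Complex.mul_conj]
    norm_cast
    simp [Complex.normSq_eq_norm_sq, hz]
  have htrWU : Matrix.trace ((W : Matrix (Fin d) (Fin d) ℂ) * (U : Matrix (Fin d) (Fin d) ℂ)ᴴ)
      = (starRingEnd ℂ) (Matrix.trace ((U : Matrix (Fin d) (Fin d) ℂ) * (W : Matrix (Fin d) (Fin d) ℂ)ᴴ)) := by
    have : ((U : Matrix (Fin d) (Fin d) ℂ) * (W : Matrix (Fin d) (Fin d) ℂ)ᴴ)ᴴ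
        = (W : Matrix (Fin d) (Fin d) ℂ) * (U : Matrix (Fin d) (Fin d) ℂ)ᴴ := by
      rw [Matrix.conjTranspose_mul, Matrix.conjTranspose_conjTranspose]
    rw [← this, Matrix.trace_conjTranspose]
    rfl
  rw [Matrix.conjTranspose_sub, Matrix.conjTranspose_smul, Matrix.sub_mul, Matrix.mul_sub,
    Matrix.mul_sub, Matrix.smul_mul, Matrix.mul_smul, Matrix.smul_mul, Matrix.mul_smul]
  simp only [Matrix.trace_sub, Matrix.trace_smul, hU, smul_smul, hzz]
  rw [htrWU, hW]
  simp [Matrix.trace_one, Complex.star_def]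
  linear_combination (d:ℂ) * hzz

set_option maxHeartbeats 1000000 in
set_option synthInstance.maxHeartbeats 400000 in
lemma trace_mul_conjT {d : ℕ} (A : Matrix (Fin d) (Fin d) ℂ) :
    Matrix.trace (A * Aᴴ) = ((∑ i, ∑ j, ‖A i j‖ ^ 2 : ℝ) : ℂ) := by
  rw [Matrix.trace]
  push_cast
  congr 1
  funext i
  rw [Matrix.diag_apply, Matrix.mul_apply]
  congr 1
  funext j
  rw [Matrix.conjTranspose_apply]
  rw [Complex.star_def, Complex.mul_conj]
  norm_cast
  simp [Complex.normSq_eq_norm_sq]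

set_option maxHeartbeats 1000000 in
set_option synthInstance.maxHeartbeats 400000 in
lemma key {d : ℕ} (U W : UG d) (z : ℂ) (hz : ‖z‖ = 1) (η : ℝ)
    (hη : opNorm ((U : Matrix (Fin d) (Fin d) ℂ) - z • (W : Matrix (Fin d) (Fin d) ℂ)) ≤ η) :
    (d : ℝ) * (1 - η ^ 2 / 2) ≤
      ‖Matrix.trace ((U : Matrix (Fin d) (Fin d) ℂ) * (W : Matrix (Fin d) (Fin d) ℂ)ᴴ)‖ := by
  set A : Matrix (Fin d) (Fin d) ℂ :=
    (U : Matrix (Fin d) (Fin d) ℂ) - z • (W : Matrix (Fin d) (Fin d) ℂ) with hA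
  set T : ℂ := Matrix.trace ((U : Matrix (Fin d) (Fin d) ℂ) * (W : Matrix (Fin d) (Fin d) ℂ)ᴴ) with hT
  have hηnn : 0 ≤ η := le_trans (norm_nonneg _) hη
  have hF : (∑ i, ∑ j, ‖A i j‖ ^ 2 : ℝ) ≤ (d : ℝ) * η ^ 2 := by
    calc (∑ i, ∑ j, ‖A i j‖ ^ 2 : ℝ) ≤ ∑ _i : Fin d, opNorm A ^ 2 :=
          Finset.sum_le_sum (fun i _ => row_sum_le A i)
      _ = (d : ℝ) * opNorm A ^ 2 := by simp [mul_comm]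
      _ ≤ (d : ℝ) * η ^ 2 := by
          have : opNorm A ^ 2 ≤ η ^ 2 := by
            apply pow_le_pow_left₀ (norm_nonneg _) hη _
          exact mul_le_mul_of_nonneg_left this (Nat.cast_nonneg d)
  have heq : ((∑ i, ∑ j, ‖A i j‖ ^ 2 : ℝ) : ℂ)
      = 2 * d - ((starRingEnd ℂ) z * T + z * (starRingEnd ℂ) T) := by
    rw [← trace_mul_conjT A, hA, trace_sub_smul U W z hz]
  have hre : (∑ i, ∑ j, ‖A i j‖ ^ 2 : ℝ) = 2 * d - 2 * ((starRingEnd ℂ) z * T).re := by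
    have h2 : z * (starRingEnd ℂ) T = (starRingEnd ℂ) ((starRingEnd ℂ) z * T) := by
      simp [map_mul]
    have h3 := congrArg Complex.re heq
    rw [h2] at h3
    simp only [Complex.ofReal_re, Complex.sub_re, Complex.add_re, Complex.conj_re,
      Complex.mul_re, Complex.re_ofNat, Complex.im_ofNat, Complex.natCast_re,
      Complex.natCast_im, Complex.conj_re, Complex.conj_im] at h3
    simp only [Complex.mul_re, Complex.conj_re, Complex.conj_im]
    linarith
  have hrebound : (d : ℝ) * (1 - η ^ 2 / 2) ≤ ((starRingEnd ℂ) z * T).re := by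
    nlinarith [hF, hre]
  calc (d : ℝ) * (1 - η ^ 2 / 2) ≤ ((starRingEnd ℂ) z * T).re := hrebound
    _ ≤ ‖(starRingEnd ℂ) z * T‖ := Complex.re_le_norm _
    _ = ‖T‖ := by rw [norm_mul]; simp [hz]

set_option maxHeartbeats 1000000 in
set_option synthInstance.maxHeartbeats 400000 in
lemma keyD {d : ℕ} (U W : UG d) {ε : ℝ} (hD : D U W ≤ ε) :
    (d : ℝ) * (1 - ε ^ 2 / 2) ≤
      ‖Matrix.trace ((U : Matrix (Fin d) (Fin d) ℂ) * (W : Matrix (Fin d) (Fin d) ℂ)ᴴ)‖ := by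
  have hne : Nonempty {z : ℂ // ‖z‖ = 1} := ⟨⟨1, by simp⟩⟩
  have hstep : ∀ η : ℝ, ε < η →
      (d : ℝ) * (1 - η ^ 2 / 2) ≤
        ‖Matrix.trace ((U : Matrix (Fin d) (Fin d) ℂ) * (W : Matrix (Fin d) (Fin d) ℂ)ᴴ)‖ := by
    intro η hη
    have : D U W < η := lt_of_le_of_lt hD hη
    obtain ⟨z, hzlt⟩ := exists_lt_of_ciInf_lt this
    exact key U W z.val z.2 η (le_of_lt hzlt)
  have htend : Filter.Tendsto (fun η : ℝ => (d : ℝ) * (1 - η ^ 2 / 2))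
      (nhdsWithin ε (Set.Ioi ε)) (nhds ((d : ℝ) * (1 - ε ^ 2 / 2))) := by
    apply Filter.Tendsto.mono_left _ nhdsWithin_le_nhds
    exact (Continuous.tendsto (by continuity) ε)
  exact le_of_tendsto htend (Filter.eventually_of_mem self_mem_nhdsWithin
    (fun η hη => hstep η hη))

set_option maxHeartbeats 1000000 in
set_option synthInstance.maxHeartbeats 400000 in
lemma meas_f {d : ℕ} (W : UG d) (k : ℕ) :
    Measurable (fun U : UG d => ENNReal.ofReal
      (‖Matrix.trace ((U : Matrix (Fin d) (Fin d) ℂ) * (W : Matrix (Fin d) (Fin d) ℂ)ᴴ)‖ ^ (2 * k))) := by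
  apply Measurable.ennreal_ofReal
  apply Continuous.measurable
  apply Continuous.pow
  apply Continuous.norm
  exact Continuous.matrix_trace (Continuous.matrix_mul continuous_subtype_val continuous_const)

set_option maxHeartbeats 1000000 in
set_option synthInstance.maxHeartbeats 400000 in
lemma ball_bound {d : ℕ} (k : ℕ) {ε : ℝ} (hε0 : 0 < ε) (hε1 : ε < 1) (hd : 1 ≤ d)
    (ν : Measure (UG d))
    (hmom : ∀ V : UG d,
      ∫⁻ U, ENNReal.ofReal
          (‖Matrix.trace ((U : Matrix (Fin d) (Fin d) ℂ) *
              (V : Matrix (Fin d) (Fin d) ℂ)ᴴ)‖ ^ (2 * k)) ∂ν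
        ≤ ENNReal.ofReal ((k.factorial : ℝ) + 1)) (W : UG d) :
    ν {U : UG d | D U W ≤ ε} ≤
      ENNReal.ofReal (((k.factorial : ℝ) + 1) / ((d : ℝ) * (1 - ε ^ 2 / 2)) ^ (2 * k)) := by
  set t : ℝ := (d : ℝ) * (1 - ε ^ 2 / 2) with ht
  have ht0 : 0 < t := by
    apply mul_pos
    · exact_mod_cast Nat.pos_of_ne_zero (by omega)
    · nlinarith
  set f : UG d → ℝ≥0∞ := fun U => ENNReal.ofReal
      (‖Matrix.trace ((U : Matrix (Fin d) (Fin d) ℂ) * (W : Matrix (Fin d) (Fin d) ℂ)ᴴ)‖ ^ (2 * k)) with hf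
  have hsub : {U : UG d | D U W ≤ ε} ⊆ {U : UG d | ENNReal.ofReal (t ^ (2 * k)) ≤ f U} := by
    intro U hU
    have h1 := keyD U W hU
    simp only [Set.mem_setOf_eq, hf]
    apply ENNReal.ofReal_le_ofReal
    exact pow_le_pow_left₀ (le_of_lt ht0) h1 _
  calc ν {U : UG d | D U W ≤ ε} ≤ ν {U : UG d | ENNReal.ofReal (t ^ (2 * k)) ≤ f U} :=
        measure_mono hsub
    _ ≤ (∫⁻ U, f U ∂ν) / ENNReal.ofReal (t ^ (2 * k)) := by
        apply meas_ge_le_lintegral_div (meas_f W k).aemeasurable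
        · simp only [ne_eq, ENNReal.ofReal_eq_zero, not_le]; positivity
        · exact ENNReal.ofReal_ne_top
    _ ≤ ENNReal.ofReal ((k.factorial : ℝ) + 1) / ENNReal.ofReal (t ^ (2 * k)) := by
        exact ENNReal.div_le_div_right (hmom W) _
    _ = ENNReal.ofReal (((k.factorial : ℝ) + 1) / t ^ (2 * k)) := by
        rw [ENNReal.ofReal_div_of_pos (by positivity)]

def Xfin {d : ℕ} (𝒢 : Finset (UG d)) : ℕ → Finset (UG d)
  | 0 => {1}
  | n + 1 => Finset.image (fun p : UG d × UG d => p.1 * p.2) (𝒢 ×ˢ Xfin 𝒢 n)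

def Wfin {d : ℕ} (𝒢 : Finset (UG d)) (r : ℕ) : Finset (UG d) :=
  (Finset.range (r + 1)).biUnion (Xfin 𝒢)

lemma Xfin_card {d : ℕ} (𝒢 : Finset (UG d)) (n : ℕ) : (Xfin 𝒢 n).card ≤ 𝒢.card ^ n := by
  induction n with
  | zero => simp [Xfin]
  | succ n ih =>
      calc (Xfin 𝒢 (n+1)).card ≤ (𝒢 ×ˢ Xfin 𝒢 n).card := Finset.card_image_le
        _ = 𝒢.card * (Xfin 𝒢 n).card := Finset.card_product _ _
        _ ≤ 𝒢.card * 𝒢.card ^ n := Nat.mul_le_mul_left _ ih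
        _ = 𝒢.card ^ (n+1) := by ring

lemma Wfin_card {d : ℕ} (𝒢 : Finset (UG d)) (h𝒢 : 2 ≤ 𝒢.card) (r : ℕ) :
    (Wfin 𝒢 r).card ≤ 𝒢.card ^ (r + 1) := by
  have h1 : (Wfin 𝒢 r).card ≤ ∑ n ∈ Finset.range (r + 1), (Xfin 𝒢 n).card :=
    Finset.card_biUnion_le
  have h2 : ∑ n ∈ Finset.range (r + 1), (Xfin 𝒢 n).card
      ≤ ∑ n ∈ Finset.range (r + 1), 𝒢.card ^ n :=
    Finset.sum_le_sum (fun n _ => Xfin_card 𝒢 n)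
  have h3 : ∀ r : ℕ, ∑ n ∈ Finset.range (r + 1), 𝒢.card ^ n ≤ 𝒢.card ^ (r + 1) := by
    intro r
    induction r with
    | zero => rw [Finset.sum_range_one, pow_zero, pow_one]; omega
    | succ r ih =>
        rw [Finset.sum_range_succ]
        calc ∑ n ∈ Finset.range (r+1), 𝒢.card ^ n + 𝒢.card ^ (r+1)
            ≤ 𝒢.card ^ (r+1) + 𝒢.card ^ (r+1) := by omega
          _ = 2 * 𝒢.card ^ (r+1) := by ring
          _ ≤ 𝒢.card * 𝒢.card ^ (r+1) := Nat.mul_le_mul_right _ h𝒢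
          _ = 𝒢.card ^ (r+2) := by ring
  exact h1.trans (h2.trans (h3 r))

lemma wordsLe_sub {d : ℕ} (𝒢 : Finset (UG d)) (r : ℕ) : wordsLe 𝒢 r ⊆ ↑(Wfin 𝒢 r) := by
  have hX : ∀ l : List (UG d), (∀ g ∈ l, g ∈ 𝒢) → l.prod ∈ Xfin 𝒢 l.length := by
    intro l
    induction l with
    | nil => intro _; simp [Xfin]
    | cons g l ih =>
        intro h
        simp only [List.prod_cons, List.length_cons, Xfin, Finset.mem_image]
        exact ⟨(g, l.prod), Finset.mem_product.mpr
          ⟨h g List.mem_cons_self, ih (fun x hx => h x (List.mem_cons_of_mem g hx))⟩, rfl⟩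
  rintro W ⟨l, hlen, hmem, rfl⟩
  simp only [Finset.coe_biUnion, Wfin, Finset.mem_coe, Finset.mem_biUnion]
  exact Set.mem_biUnion (by simp [Finset.mem_range]; omega : l.length ∈ (Finset.range (r+1) : Finset ℕ))
    (by exact_mod_cast hX l hmem)

lemma fact_bound : ∀ k : ℕ, 6 ≤ k → 2 ^ k * ((k.factorial : ℝ) + 1) ≤ (k : ℝ) ^ k := by
  intro k hk
  induction k, hk using Nat.le_induction with
  | base => norm_num [Nat.factorial]
  | succ k hk ih =>
      have hk0 : (0:ℝ) < k := by positivity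
      have hbern : (2:ℝ) * (k:ℝ) ^ k ≤ ((k:ℝ) + 1) ^ k := by
        have h1 : (1:ℝ) + (k:ℝ) * (1 / (k:ℝ)) ≤ (1 + 1 / (k:ℝ)) ^ k :=
          one_add_mul_le_pow (le_trans (by norm_num) (by positivity : (0:ℝ) ≤ 1/(k:ℝ))) k
        have h2 : (1:ℝ) + (k:ℝ) * (1 / (k:ℝ)) = 2 := by
          rw [mul_one_div, div_self hk0.ne']; norm_num
        have h3 : ((1:ℝ) + 1 / (k:ℝ)) ^ k * (k:ℝ) ^ k = ((k:ℝ) + 1) ^ k := by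
          rw [← mul_pow]; congr 1; field_simp
        nlinarith [pow_pos hk0 k, pow_nonneg hk0.le k, h1, h2, h3]
      have hfac : ((k+1).factorial : ℝ) + 1 ≤ ((k:ℝ) + 1) * ((k.factorial : ℝ) + 1) := by
        rw [Nat.factorial_succ]
        push_cast
        nlinarith [Nat.one_le_iff_ne_zero.mpr (Nat.factorial_ne_zero k), hk0]
      calc (2:ℝ) ^ (k+1) * (((k+1).factorial : ℝ) + 1)
          ≤ 2 ^ (k+1) * (((k:ℝ) + 1) * ((k.factorial : ℝ) + 1)) := by
            apply mul_le_mul_of_nonneg_left hfac (by positivity)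
        _ = ((k:ℝ) + 1) * (2 * (2 ^ k * ((k.factorial : ℝ) + 1))) := by ring
        _ ≤ ((k:ℝ) + 1) * (2 * (k:ℝ) ^ k) := by
            apply mul_le_mul_of_nonneg_left _ (by positivity)
            nlinarith
        _ ≤ ((k:ℝ) + 1) * ((k:ℝ) + 1) ^ k := by
            apply mul_le_mul_of_nonneg_left hbern (by positivity)
        _ = ((k:ℝ) + 1) ^ (k+1) := by ring
        _ = (((k+1 : ℕ)):ℝ) ^ (k+1) := by push_cast; ring

lemma real_ineq {d k : ℕ} (hd : 2 ≤ d) (hk6 : 6 ≤ k) (hkd : k ≤ d ^ 2)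
    {ε : ℝ} (hε0 : 0 < ε) (hε1 : ε < 1) :
    ((k.factorial : ℝ) + 1) / ((d : ℝ) * (1 - ε ^ 2 / 2)) ^ (2 * k)
      ≤ 1 / (2 * (1 - ε ^ 2)) ^ k := by
  have hε2 : 0 < 1 - ε ^ 2 := by nlinarith
  have ht0 : 0 < (d : ℝ) * (1 - ε ^ 2 / 2) := by
    apply mul_pos
    · exact_mod_cast Nat.pos_of_ne_zero (by omega)
    · nlinarith
  have ha0 : (0:ℝ) < 2 * (1 - ε ^ 2) := by linarith
  rw [div_le_div_iff₀ (by positivity) (by positivity)]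
  have hmain : ((k.factorial : ℝ) + 1) * (2 * (1 - ε ^ 2)) ^ k
      ≤ ((d : ℝ) * (1 - ε ^ 2 / 2)) ^ (2 * k) := by
    have e1 : ((d : ℝ) * (1 - ε ^ 2 / 2)) ^ (2 * k)
        = ((d : ℝ) ^ 2) ^ k * ((1 - ε ^ 2 / 2) ^ 2) ^ k := by
      rw [mul_pow, ← pow_mul, ← pow_mul]
    have e2 : ((k.factorial : ℝ) + 1) * (2 * (1 - ε ^ 2)) ^ k
        = (2 ^ k * ((k.factorial : ℝ) + 1)) * (1 - ε ^ 2) ^ k := by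
      rw [mul_pow]; ring
    rw [e1, e2]
    apply mul_le_mul
    · calc (2:ℝ) ^ k * ((k.factorial : ℝ) + 1) ≤ (k : ℝ) ^ k := fact_bound k hk6
        _ ≤ ((d : ℝ) ^ 2) ^ k := by
            apply pow_le_pow_left₀ (Nat.cast_nonneg k)
            exact_mod_cast hkd.trans (le_of_eq rfl)
    · apply pow_le_pow_left₀ hε2.le
      nlinarith
    · positivity
    · positivity
  calc ((k.factorial : ℝ) + 1) * (2 * (1 - ε ^ 2)) ^ k
      ≤ ((d : ℝ) * (1 - ε ^ 2 / 2)) ^ (2 * k) := hmain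
    _ = 1 * ((d : ℝ) * (1 - ε ^ 2 / 2)) ^ (2 * k) := by ring

end


theorem stmt19 {d : ℕ} (hd : 2 ≤ d) (𝒢 : Finset (UG d)) (h𝒢 : 2 ≤ 𝒢.card)
    (k : ℕ) (hk6 : 6 ≤ k) (hkd : k ≤ d ^ 2)
    {ε : ℝ} (hε0 : 0 < ε) (hε1 : ε < 1)
    (ν : Measure (UG d)) [IsProbabilityMeasure ν]
    (hmom : ∀ V : UG d,
      ∫⁻ U, ENNReal.ofReal
          (‖Matrix.trace ((U : Matrix (Fin d) (Fin d) ℂ) *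
              (V : Matrix (Fin d) (Fin d) ℂ)ᴴ)‖ ^ (2 * k)) ∂ν
        ≤ ENNReal.ofReal ((k.factorial : ℝ) + 1)) :
    (∀ r : ℕ, ν {U : UG d | ∃ W ∈ wordsLe 𝒢 r, D U W ≤ ε}
        ≤ ENNReal.ofReal ((𝒢.card : ℝ) ^ (r + 1) / (2 * (1 - ε ^ 2)) ^ k)) ∧
      (∀ (Δ : ℝ) (r : ℕ), 0 < Δ → Δ < 1 →
        ((r : ℝ) + 1) * Real.log (𝒢.card) ≤
            (k : ℝ) * Real.log (2 * (1 - ε ^ 2)) - Real.log (1 / Δ) →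
        ν {U : UG d | ∃ W ∈ wordsLe 𝒢 r, D U W ≤ ε} ≤ ENNReal.ofReal Δ) := by
  have hd1 : 1 ≤ d := by omega
  have hε2 : (0:ℝ) < 1 - ε ^ 2 := by nlinarith
  have ha0 : (0:ℝ) < 2 * (1 - ε ^ 2) := by linarith
  have hm2 : (2:ℝ) ≤ (𝒢.card : ℝ) := by exact_mod_cast h𝒢
  have part1 : ∀ r : ℕ, ν {U : UG d | ∃ W ∈ wordsLe 𝒢 r, D U W ≤ ε}
      ≤ ENNReal.ofReal ((𝒢.card : ℝ) ^ (r + 1) / (2 * (1 - ε ^ 2)) ^ k) := by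
    intro r
    have hsub : {U : UG d | ∃ W ∈ wordsLe 𝒢 r, D U W ≤ ε} ⊆
        ⋃ W ∈ Wfin 𝒢 r, {U : UG d | D U W ≤ ε} := by
      rintro U ⟨W, hW, hD⟩
      exact Set.mem_biUnion (wordsLe_sub 𝒢 r hW) hD
    set C : ℝ := ((k.factorial : ℝ) + 1) / ((d : ℝ) * (1 - ε ^ 2 / 2)) ^ (2 * k) with hC
    have hC0 : 0 ≤ C := by
      apply div_nonneg (by positivity)
      apply pow_nonneg
      apply mul_nonneg (Nat.cast_nonneg d)
      nlinarith
    calc ν {U : UG d | ∃ W ∈ wordsLe 𝒢 r, D U W ≤ ε}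
        ≤ ν (⋃ W ∈ Wfin 𝒢 r, {U : UG d | D U W ≤ ε}) := measure_mono hsub
      _ ≤ ∑ W ∈ Wfin 𝒢 r, ν {U : UG d | D U W ≤ ε} := measure_biUnion_finset_le _ _
      _ ≤ ∑ _W ∈ Wfin 𝒢 r, ENNReal.ofReal C :=
          Finset.sum_le_sum (fun W _ => ball_bound k hε0 hε1 hd1 ν hmom W)
      _ = ((Wfin 𝒢 r).card : ℝ≥0∞) * ENNReal.ofReal C := by
          rw [Finset.sum_const, nsmul_eq_mul]
      _ = ENNReal.ofReal (((Wfin 𝒢 r).card : ℝ) * C) := by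
          rw [ENNReal.ofReal_mul (Nat.cast_nonneg _), ENNReal.ofReal_natCast]
      _ ≤ ENNReal.ofReal ((𝒢.card : ℝ) ^ (r + 1) / (2 * (1 - ε ^ 2)) ^ k) := by
          apply ENNReal.ofReal_le_ofReal
          have h1 : ((Wfin 𝒢 r).card : ℝ) ≤ (𝒢.card : ℝ) ^ (r + 1) := by
            exact_mod_cast Wfin_card 𝒢 h𝒢 r
          have h2 : C ≤ 1 / (2 * (1 - ε ^ 2)) ^ k :=
            real_ineq hd hk6 hkd hε0 hε1
          calc ((Wfin 𝒢 r).card : ℝ) * C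
              ≤ (𝒢.card : ℝ) ^ (r + 1) * (1 / (2 * (1 - ε ^ 2)) ^ k) :=
                mul_le_mul h1 h2 hC0 (by positivity)
            _ = (𝒢.card : ℝ) ^ (r + 1) / (2 * (1 - ε ^ 2)) ^ k := by ring
  refine ⟨part1, fun Δ r hΔ0 hΔ1 hlog => le_trans (part1 r) (ENNReal.ofReal_le_ofReal ?_)⟩
  set m : ℝ := (𝒢.card : ℝ) with hm
  set a : ℝ := 2 * (1 - ε ^ 2) with ha
  have hx0 : (0:ℝ) < m ^ (r + 1) := by positivity
  have hy0 : (0:ℝ) < a ^ k := by positivity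
  have hlog2 : Real.log (m ^ (r + 1)) ≤ Real.log (a ^ k * Δ) := by
    rw [Real.log_mul hy0.ne' hΔ0.ne', Real.log_pow, Real.log_pow]
    have hinv : Real.log (1 / Δ) = - Real.log Δ := by
      rw [one_div, Real.log_inv]
    push_cast
    rw [hinv] at hlog
    linarith
  have hle : m ^ (r + 1) ≤ a ^ k * Δ :=
    (Real.log_le_log_iff hx0 (by positivity)).mp hlog2
  rw [div_le_iff₀ hy0]
  linarith

end Paper
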